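/- Let O be a complete discrete valuation ring with maximal ideal m and residue field of size λ. Fix D ∈ (O/m)^× with D ≠ 1. Then the number of matrices g ∈ GL_2(O/m) with det(g) = D and det(g-1) ≠ 0 equals λ(λ-2)(λ+1). -/

import Mathlib

open Finset

section Aux

variable {F : Type*} [Field F] [Fintype F] [DecidableEq F]

private lemma aux_pairCount (e : F) :
    (univ.filter (fun y : F × F => y.1 * y.2 = e)).card
      = if e = 0 then 2 * Fintype.card F - 1 else Fintype.card F - 1 := by
  split_ifs with h
  · subst h
    have hset : univ.filter (fun y : F × F => y.1 * y.2 = 0)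
        = ({0} ×ˢ univ) ∪ (univ ×ˢ {0}) := by
      ext ⟨a, b⟩
      simp [mul_eq_zero, or_comm, eq_comm]
    have hinter : (({0} ×ˢ (univ : Finset F)) ∩ ((univ : Finset F) ×ˢ {0}))
        = {((0 : F), (0 : F))} := by
      ext ⟨a, b⟩
      simp [Prod.ext_iff, and_comm, eq_comm]
    have hu := Finset.card_union_add_card_inter ({0} ×ˢ (univ : Finset F))
      ((univ : Finset F) ×ˢ {0})
    rw [hinter] at hu
    simp only [Finset.card_product, Finset.card_singleton, Finset.card_univ, one_mul, mul_one] at hu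
    rw [hset]
    have hq : 1 ≤ Fintype.card F := Fintype.card_pos
    omega
  · have : Fintype.card F - 1 = (univ.erase (0 : F)).card := by
      rw [Finset.card_erase_of_mem (mem_univ _), Finset.card_univ]
    rw [this]
    apply Finset.card_nbij' (fun y => y.1) (fun b => (b, b⁻¹ * e))
    · intro y hy
      simp only [mem_coe, mem_filter, mem_univ, true_and] at hy
      refine Finset.mem_erase.mpr ⟨fun h0 => h ?_, mem_univ _⟩
      rw [← hy, (show y.1 = 0 from h0), zero_mul]
    · intro b hb
      simp only [mem_coe, mem_erase, mem_univ, and_true] at hb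
      simp only [mem_coe, mem_filter, mem_univ, true_and]
      field_simp
    · intro y hy
      simp only [mem_coe, mem_filter, mem_univ, true_and] at hy
      have h1 : y.1 ≠ 0 := fun h0 => h (by rw [← hy, h0, zero_mul])
      have h2 : y.1⁻¹ * e = y.2 := by rw [← hy]; field_simp
      simp [h2]
    · intro b hb; rfl

private lemma aux_traceCount (t : F) :
    (univ.filter (fun x : F × F => x.1 + x.2 = t)).card = Fintype.card F := by
  rw [← Finset.card_univ (α := F)]
  apply Finset.card_nbij' (fun x => x.1) (fun a => (a, t - a))
  · intro x _; exact mem_univ _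
  · intro a _
    simp only [mem_coe, mem_filter, mem_univ, true_and]
    ring
  · intro x hx
    simp only [mem_coe, mem_filter, mem_univ, true_and] at hx
    have : t - x.1 = x.2 := by linear_combination -hx
    simp [this]
  · intro a _; rfl

private lemma aux_rootPair (D : F) (hD1 : D ≠ 1) :
    univ.filter (fun x : F × F => x.1 * x.2 = D ∧ x.1 + x.2 = D + 1)
      = {((1 : F), D), (D, (1 : F))} := by
  ext ⟨a, d⟩
  simp only [mem_filter, mem_univ, true_and, mem_insert, mem_singleton, Prod.mk.injEq]
  constructor
  · rintro ⟨h1, h2⟩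
    have hf : (a - 1) * (a - D) = 0 := by linear_combination a * h2 - h1
    rcases mul_eq_zero.mp hf with hf | hf
    · left
      have ha : a = 1 := by linear_combination hf
      exact ⟨ha, by linear_combination h2 - hf⟩
    · right
      have ha : a = D := by linear_combination hf
      exact ⟨ha, by linear_combination h2 - hf⟩
  · rintro (⟨rfl, rfl⟩ | ⟨rfl, rfl⟩) <;> constructor <;> ring

private lemma aux_count_main (D : F) (hD0 : D ≠ 0) (hD1 : D ≠ 1) :
    (univ.filter (fun p : (F × F) × F × F =>
        p.1.1 * p.1.2 - p.2.1 * p.2.2 = D ∧ p.1.1 + p.1.2 ≠ D + 1)).card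
      = Fintype.card F * (Fintype.card F - 2) * (Fintype.card F + 1) := by
  have h3 : 3 ≤ Fintype.card F := by
    have hsub : ({0, 1, D} : Finset F).card ≤ Fintype.card F := by
      rw [← Finset.card_univ]; exact Finset.card_le_univ _
    have : ({0, 1, D} : Finset F).card = 3 := by
      rw [Finset.card_insert_of_notMem (by simp [Ne.symm hD0]),
        Finset.card_insert_of_notMem (by simp [Ne.symm hD1])]
      simp
    omega
  obtain ⟨m, hm⟩ : ∃ m, Fintype.card F = m + 3 := ⟨Fintype.card F - 3, by omega⟩
  rw [Finset.card_filter, ← Finset.univ_product_univ, Finset.sum_product]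
  have step1 : ∀ x : F × F,
      (∑ y : F × F, if ((x, y).1.1 * (x, y).1.2 - (x, y).2.1 * (x, y).2.2 = D
          ∧ (x, y).1.1 + (x, y).1.2 ≠ D + 1) then 1 else 0)
        = if x.1 + x.2 = D + 1 then 0
          else (if x.1 * x.2 = D then 2 * Fintype.card F - 1 else Fintype.card F - 1) := by
    intro x
    rw [← Finset.card_filter]
    by_cases hx : x.1 + x.2 = D + 1
    · rw [if_pos hx]
      rw [Finset.card_eq_zero, Finset.filter_eq_empty_iff]
      intro y _
      simp [hx]
    · rw [if_neg hx]
      have heq : (univ.filter fun y : F × F =>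
          (x.1 * x.2 - y.1 * y.2 = D ∧ x.1 + x.2 ≠ D + 1))
          = univ.filter (fun y : F × F => y.1 * y.2 = x.1 * x.2 - D) := by
        ext y
        simp only [mem_filter, mem_univ, true_and]
        constructor
        · rintro ⟨h1, _⟩; linear_combination -h1
        · intro h1; exact ⟨by linear_combination -h1, hx⟩
      rw [heq, aux_pairCount]
      simp only [sub_eq_zero]
  rw [Finset.sum_congr rfl (fun x _ => step1 x)]
  rw [Finset.sum_ite, Finset.sum_const_zero, zero_add, Finset.sum_ite,
    Finset.sum_const, Finset.sum_const, smul_eq_mul, smul_eq_mul]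
  set s := univ.filter (fun x : F × F => ¬x.1 + x.2 = D + 1) with hs
  have hdet : (univ.filter fun x : F × F => x.1 * x.2 = D).card = Fintype.card F - 1 := by
    rw [aux_pairCount, if_neg hD0]
  have hsplitdet := Finset.card_filter_add_card_filter_not
    (s := univ.filter fun x : F × F => x.1 * x.2 = D) (p := fun x => x.1 + x.2 = D + 1)
  rw [Finset.filter_filter, Finset.filter_filter, aux_rootPair D hD1] at hsplitdet
  have h2card : ({((1 : F), D), (D, (1 : F))} : Finset (F × F)).card = 2 := by
    rw [Finset.card_insert_of_notMem
      (by simp [Prod.ext_iff]; intro h; exact absurd h.symm hD1), Finset.card_singleton]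
  rw [h2card, hdet] at hsplitdet
  have hAeq : (s.filter fun x : F × F => x.1 * x.2 = D)
      = univ.filter (fun x : F × F => x.1 * x.2 = D ∧ ¬x.1 + x.2 = D + 1) := by
    rw [hs, Finset.filter_comm, Finset.filter_filter]
  have hA : (s.filter fun x : F × F => x.1 * x.2 = D).card = m := by
    rw [hAeq]; omega
  have hscard : s.card = Fintype.card F * Fintype.card F - Fintype.card F := by
    have := Finset.card_filter_add_card_filter_not
      (s := (univ : Finset (F × F))) (p := fun x : F × F => x.1 + x.2 = D + 1)
    rw [aux_traceCount, Finset.card_univ, Fintype.card_prod] at this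
    rw [hs]; omega
  have hsplitB := Finset.card_filter_add_card_filter_not
    (s := s) (p := fun x : F × F => x.1 * x.2 = D)
  rw [hA, hscard] at hsplitB
  obtain ⟨M, hM⟩ : ∃ M, M = m * m := ⟨_, rfl⟩
  have hq2 : Fintype.card F * Fintype.card F = M + 6 * m + 9 := by rw [hM, hm]; ring
  have hB : (s.filter fun x : F × F => ¬x.1 * x.2 = D).card = M + 4 * m + 6 := by omega
  rw [hA, hB, hm]
  have e1 : 2 * (m + 3) - 1 = 2 * m + 5 := by omega
  have e2 : (m + 3) - 1 = m + 2 := by omega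
  have e3 : (m + 3) - 2 = m + 1 := by omega
  rw [e1, e2, e3, hM]
  ring

end Aux

private lemma aux_field_count {F : Type*} [Field F] (D : F) (hD0 : D ≠ 0) (hD1 : D ≠ 1) :
    Nat.card {g : Matrix (Fin 2) (Fin 2) F | g.det = D ∧ (g - 1).det ≠ 0}
      = Nat.card F * (Nat.card F - 2) * (Nat.card F + 1) := by
  have hiff : ∀ g : Matrix (Fin 2) (Fin 2) F,
      (g.det = D ∧ (g - 1).det ≠ 0) ↔
        ((g 0 0) * (g 1 1) - (g 0 1) * (g 1 0) = D ∧ (g 0 0) + (g 1 1) ≠ D + 1) := by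
    intro g
    rw [Matrix.det_fin_two]
    refine and_congr_right fun hdet => ?_
    have hd2 : (g - 1).det = D + 1 - (g 0 0 + g 1 1) := by
      rw [Matrix.det_fin_two]
      simp only [Matrix.sub_apply, Matrix.one_apply_eq, Matrix.one_apply_ne (by decide : (0 : Fin 2) ≠ 1),
        Matrix.one_apply_ne (by decide : (1 : Fin 2) ≠ 0), sub_zero]
      linear_combination hdet
    rw [hd2, sub_ne_zero]
    exact ne_comm
  by_cases hfin : Finite F
  · letI : Fintype F := Fintype.ofFinite F
    letI : DecidableEq F := Classical.decEq F
    let E : Matrix (Fin 2) (Fin 2) F ≃ (F × F) × F × F :=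
      { toFun := fun g => ((g 0 0, g 1 1), (g 0 1, g 1 0))
        invFun := fun p => !![p.1.1, p.2.1; p.2.2, p.1.2]
        left_inv := fun g => by
          simp only []
          exact (Matrix.eta_fin_two g).symm
        right_inv := fun p => by
          simp }
    have e1 : {g : Matrix (Fin 2) (Fin 2) F | g.det = D ∧ (g - 1).det ≠ 0} ≃
        {p : (F × F) × F × F | p.1.1 * p.1.2 - p.2.1 * p.2.2 = D ∧ p.1.1 + p.1.2 ≠ D + 1} :=
      Equiv.subtypeEquiv E (fun g => hiff g)
    rw [Nat.card_congr e1, Nat.card_eq_fintype_card, Nat.card_eq_fintype_card,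
      Fintype.card_subtype]
    exact aux_count_main D hD0 hD1
  · rw [not_finite_iff_infinite] at hfin
    have hS : {g : Matrix (Fin 2) (Fin 2) F | g.det = D ∧ (g - 1).det ≠ 0}.Infinite := by
      have hinj : Function.Injective (fun t : F => (!![0, -D; 1, t] : Matrix (Fin 2) (Fin 2) F)) := by
        intro t t' h
        have := congrFun (congrFun h 1) 1
        simpa using this
      have hcompl : ({D + 1}ᶜ : Set F).Infinite :=
        Set.Finite.infinite_compl (Set.finite_singleton _)
      refine Set.Infinite.mono ?_ ((hcompl.image (hinj.injOn)))
      rintro g ⟨t, ht, rfl⟩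
      simp only [Set.mem_compl_iff, Set.mem_singleton_iff] at ht
      refine (hiff _).mpr ⟨by simp, ?_⟩
      simpa using ht
    rw [Nat.card_eq_zero_of_infinite (α := F),
      @Nat.card_eq_zero_of_infinite _ (Set.infinite_coe_iff.mpr hS)]

theorem stmt_3 {O : Type*} [CommRing O] [IsDomain O] [IsDiscreteValuationRing O]
    [IsAdicComplete (IsLocalRing.maximalIdeal O) O]
    (lam : ℕ) (hlam : Nat.card (O ⧸ IsLocalRing.maximalIdeal O) = lam)
    (D : O ⧸ IsLocalRing.maximalIdeal O) (hD : IsUnit D) (hD1 : D ≠ 1) :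
    Nat.card {g : Matrix (Fin 2) (Fin 2) (O ⧸ IsLocalRing.maximalIdeal O) |
        g.det = D ∧ (g - 1).det ≠ 0} = lam * (lam - 2) * (lam + 1) := by
  letI : Field (O ⧸ IsLocalRing.maximalIdeal O) := IsLocalRing.ResidueField.field O
  subst hlam
  exact aux_field_count D hD.ne_zero hD1
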